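/- Fix n ≥ 2 and ρ* ∈ (0,1)^n, and regard F (given by the same formula) as a map on (−1,1)^n. Then F is differentiable at 0 with partial derivatives ∂F_i/∂ρ_j(0) = 1 if i = j and ∂F_i/∂ρ_j(0) = ρ*_i ρ*_j if i ≠ j. Moreover, there exists C > 0 such that for all i, j, k and all ρ ∈ [0,1/2]^n, the second partial derivative ∂²F_i/∂ρ_j∂ρ_k(ρ) satisfies |∂²F_i/∂ρ_j∂ρ_k(ρ)| ≤ C. -/

import Mathlib

open Finset

/-- Conditional-mean coefficients for the one-latent-node Gaussian tree model. -/
noncomputable def lam (n : ℕ) (ρ : Fin n → ℝ) (j : Fin n) : ℝ :=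
  (ρ j / (1 - ρ j ^ 2)) / (1 + ∑ k, ρ k ^ 2 / (1 - ρ k ^ 2))

/-- Population EM update map `F` for true correlations `ρs`. -/
noncomputable def emF (n : ℕ) (ρs ρ : Fin n → ℝ) (i : Fin n) : ℝ :=
  (ρ i + ∑ j ∈ Finset.univ.erase i, (ρs i * ρs j - ρ i * ρ j) * lam n ρ j) /
    Real.sqrt (1 + ∑ j, ∑ k ∈ Finset.univ.erase j,
      (ρs j * ρs k - ρ j * ρ k) * lam n ρ j * lam n ρ k)

noncomputable def gFun (n : ℕ) (ρs ρ : Fin n → ℝ) : ℝ :=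
  1 + ∑ j, ∑ k ∈ Finset.univ.erase j,
      (ρs j * ρs k - ρ j * ρ k) * lam n ρ j * lam n ρ k

lemma contDiffAt_lam (n : ℕ) (ρ₀ : Fin n → ℝ) (j : Fin n) (h : ∀ l, ρ₀ l ^ 2 < 1) :
    ContDiffAt ℝ ⊤ (fun ρ => lam n ρ j) ρ₀ := by
  have hproj : ∀ l : Fin n, ContDiffAt ℝ ⊤ (fun ρ : Fin n → ℝ => ρ l) ρ₀ := fun l =>
    ((ContinuousLinearMap.proj l : (Fin n → ℝ) →L[ℝ] ℝ).contDiff).contDiffAt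
  have hterm : ∀ l : Fin n, ContDiffAt ℝ ⊤ (fun ρ : Fin n → ℝ => ρ l ^ 2 / (1 - ρ l ^ 2)) ρ₀ :=
    fun l => ((hproj l).pow 2).div (contDiffAt_const.sub ((hproj l).pow 2))
      (by have := h l; intro hc; nlinarith)
  have hnum : ContDiffAt ℝ ⊤ (fun ρ : Fin n → ℝ => ρ j / (1 - ρ j ^ 2)) ρ₀ :=
    (hproj j).div (contDiffAt_const.sub ((hproj j).pow 2))
      (by have := h j; intro hc; nlinarith)
  have hden : ContDiffAt ℝ ⊤ (fun ρ : Fin n → ℝ => 1 + ∑ k, ρ k ^ 2 / (1 - ρ k ^ 2)) ρ₀ :=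
    contDiffAt_const.add (ContDiffAt.sum fun k _ => hterm k)
  refine hnum.div hden ?_
  have hS : 0 ≤ ∑ k, ρ₀ k ^ 2 / (1 - ρ₀ k ^ 2) :=
    Finset.sum_nonneg fun k _ => div_nonneg (sq_nonneg _) (by have := h k; linarith)
  intro hc; linarith

lemma contDiffAt_gFun (n : ℕ) (ρs ρ₀ : Fin n → ℝ) (h : ∀ l, ρ₀ l ^ 2 < 1) :
    ContDiffAt ℝ ⊤ (gFun n ρs) ρ₀ := by
  have hproj : ∀ l : Fin n, ContDiffAt ℝ ⊤ (fun ρ : Fin n → ℝ => ρ l) ρ₀ := fun l =>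
    ((ContinuousLinearMap.proj l : (Fin n → ℝ) →L[ℝ] ℝ).contDiff).contDiffAt
  exact contDiffAt_const.add (ContDiffAt.sum fun j _ => ContDiffAt.sum fun k _ =>
    (((contDiffAt_const.sub ((hproj j).mul (hproj k))).mul
      (contDiffAt_lam n ρ₀ j h)).mul (contDiffAt_lam n ρ₀ k h)))

lemma contDiffAt_emF (n : ℕ) (ρs ρ₀ : Fin n → ℝ) (i : Fin n) (h : ∀ l, ρ₀ l ^ 2 < 1)
    (hg : 0 < gFun n ρs ρ₀) : ContDiffAt ℝ ⊤ (fun ρ => emF n ρs ρ i) ρ₀ := by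
  have hproj : ∀ l : Fin n, ContDiffAt ℝ ⊤ (fun ρ : Fin n → ℝ => ρ l) ρ₀ := fun l =>
    ((ContinuousLinearMap.proj l : (Fin n → ℝ) →L[ℝ] ℝ).contDiff).contDiffAt
  have hnum : ContDiffAt ℝ ⊤
      (fun ρ : Fin n → ℝ => ρ i + ∑ j ∈ Finset.univ.erase i,
        (ρs i * ρs j - ρ i * ρ j) * lam n ρ j) ρ₀ :=
    (hproj i).add (ContDiffAt.sum fun j _ =>
      (contDiffAt_const.sub ((hproj i).mul (hproj j))).mul (contDiffAt_lam n ρ₀ j h))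
  have hsqrt : ContDiffAt ℝ ⊤ (fun ρ => Real.sqrt (gFun n ρs ρ)) ρ₀ :=
    (Real.contDiffAt_sqrt hg.ne').comp ρ₀ (contDiffAt_gFun n ρs ρ₀ h)
  have hne : Real.sqrt (gFun n ρs ρ₀) ≠ 0 := (Real.sqrt_pos.mpr hg).ne'
  exact hnum.div hsqrt hne

lemma gFun_pos (n : ℕ) (ρs ρ : Fin n → ℝ) (hρs : ∀ i, 0 ≤ ρs i)
    (h0 : ∀ l, 0 ≤ ρ l) (h1 : ∀ l, ρ l < 1) : 0 < gFun n ρs ρ := by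
  set S : ℝ := ∑ k, ρ k ^ 2 / (1 - ρ k ^ 2) with hSdef
  have hq : ∀ l, 0 < 1 - ρ l ^ 2 := fun l => by nlinarith [h0 l, h1 l]
  have hS : 0 ≤ S := Finset.sum_nonneg fun k _ => div_nonneg (sq_nonneg _) (hq k).le
  have hD : 0 < 1 + S := by linarith
  have hlam : ∀ l, 0 ≤ lam n ρ l := fun l =>
    div_nonneg (div_nonneg (h0 l) (hq l).le) hD.le
  have hxval : ∀ l, ρ l * lam n ρ l = (ρ l ^ 2 / (1 - ρ l ^ 2)) / (1 + S) := by
    intro l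
    rw [lam, ← hSdef]
    ring
  have hsum : ∑ l, ρ l * lam n ρ l = S / (1 + S) := by
    rw [Finset.sum_congr rfl fun l _ => hxval l, ← Finset.sum_div]
  have hxnn : ∀ l, 0 ≤ ρ l * lam n ρ l := fun l => mul_nonneg (h0 l) (hlam l)
  have hlt : S / (1 + S) < 1 := (div_lt_one hD).mpr (by linarith)
  have hsq : (S / (1 + S)) ^ 2 < 1 := by
    have h0' : 0 ≤ S / (1 + S) := div_nonneg hS hD.le
    nlinarith
  have hT : -((∑ l, ρ l * lam n ρ l) ^ 2) ≤
      ∑ j, ∑ k ∈ Finset.univ.erase j,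
        (ρs j * ρs k - ρ j * ρ k) * lam n ρ j * lam n ρ k := by
    calc -((∑ l, ρ l * lam n ρ l) ^ 2)
        = -(∑ j, ∑ k, (ρ j * lam n ρ j) * (ρ k * lam n ρ k)) := by
          rw [← Finset.sum_mul_sum]; ring
      _ ≤ -(∑ j, ∑ k ∈ Finset.univ.erase j, (ρ j * lam n ρ j) * (ρ k * lam n ρ k)) := by
          apply neg_le_neg
          refine Finset.sum_le_sum fun j _ => ?_
          exact Finset.sum_le_sum_of_subset_of_nonneg (Finset.erase_subset _ _)
            (fun k _ _ => mul_nonneg (hxnn j) (hxnn k))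
      _ = ∑ j, ∑ k ∈ Finset.univ.erase j, -((ρ j * lam n ρ j) * (ρ k * lam n ρ k)) := by
          simp [Finset.sum_neg_distrib]
      _ ≤ _ := by
          refine Finset.sum_le_sum fun j _ => Finset.sum_le_sum fun k _ => ?_
          have hpos : 0 ≤ ρs j * ρs k * lam n ρ j * lam n ρ k :=
            mul_nonneg (mul_nonneg (mul_nonneg (hρs j) (hρs k)) (hlam j)) (hlam k)
          nlinarith
  rw [gFun]
  rw [hsum] at hT
  linarith

lemma lam_single (n : ℕ) (j k : Fin n) (t : ℝ) (ht : t ^ 2 < 1) :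
    lam n (Pi.single j t) k = if k = j then t else 0 := by
  have hne : (1 : ℝ) - t ^ 2 ≠ 0 := by intro hc; nlinarith
  have hsum : ∑ l, (Pi.single j t l) ^ 2 / (1 - (Pi.single j t l) ^ 2)
      = t ^ 2 / (1 - t ^ 2) := by
    rw [Finset.sum_eq_single j]
    · simp
    · intro l _ hl; simp [Pi.single_eq_of_ne hl]
    · simp
  rw [lam, hsum]
  rcases eq_or_ne k j with rfl | hkj
  · simp only [Pi.single_eq_same]
    rw [if_pos trivial]
    field_simp
    ring
  · rw [if_neg hkj]
    simp [Pi.single_eq_of_ne hkj]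

lemma emF_single (n : ℕ) (ρs : Fin n → ℝ) (i j : Fin n) (t : ℝ) (ht : t ^ 2 < 1) :
    emF n ρs (Pi.single j t) i = if i = j then t else ρs i * ρs j * t := by
  have hden : ∑ j', ∑ k ∈ Finset.univ.erase j',
      (ρs j' * ρs k - (Pi.single j t : Fin n → ℝ) j' * (Pi.single j t : Fin n → ℝ) k) *
        lam n (Pi.single j t) j' * lam n (Pi.single j t) k = 0 := by
    refine Finset.sum_eq_zero fun j' _ => Finset.sum_eq_zero fun k hk => ?_
    rcases eq_or_ne k j with hkj | hkj
    · have : j' ≠ j := fun hc => (Finset.mem_erase.mp hk).1 (hkj.trans hc.symm)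
      rw [lam_single n j j' t ht, if_neg this]; ring
    · rw [lam_single n j k t ht, if_neg hkj]; ring
  rw [emF, hden, add_zero, Real.sqrt_one, div_one]
  rcases eq_or_ne i j with rfl | hij
  · rw [if_pos rfl]
    have hz : ∑ k ∈ Finset.univ.erase i,
        (ρs i * ρs k - (Pi.single i t : Fin n → ℝ) i * (Pi.single i t : Fin n → ℝ) k) *
          lam n (Pi.single i t) k = 0 := by
      refine Finset.sum_eq_zero fun k hk => ?_
      rw [lam_single n i k t ht, if_neg (Finset.mem_erase.mp hk).1]; ring
    rw [hz, add_zero, Pi.single_eq_same]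
  · rw [if_neg hij, Pi.single_eq_of_ne hij]
    have hmem : j ∈ Finset.univ.erase i := Finset.mem_erase.mpr ⟨Ne.symm hij, Finset.mem_univ j⟩
    rw [Finset.sum_eq_single_of_mem j hmem]
    · rw [lam_single n j j t ht, if_pos rfl]; ring
    · intro k _ hkj
      rw [lam_single n j k t ht, if_neg hkj]; ring

theorem emF_derivatives_at_zero (n : ℕ) (hn : 2 ≤ n) (ρs : Fin n → ℝ)
    (hρs : ∀ i, ρs i ∈ Set.Ioo (0 : ℝ) 1) :
    (∀ i : Fin n, DifferentiableAt ℝ (fun ρ => emF n ρs ρ i) (0 : Fin n → ℝ)) ∧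
    (∀ i j : Fin n,
      fderiv ℝ (fun ρ => emF n ρs ρ i) (0 : Fin n → ℝ) (Pi.single j 1)
        = if i = j then 1 else ρs i * ρs j) ∧
    (∃ C > (0 : ℝ), ∀ (i j k : Fin n) (ρ : Fin n → ℝ),
      (∀ l, ρ l ∈ Set.Icc (0 : ℝ) (1 / 2)) →
      |iteratedFDeriv ℝ 2 (fun ρ' => emF n ρs ρ' i) ρ ![Pi.single j 1, Pi.single k 1]|
        ≤ C) := by
  have hρsnn : ∀ i, 0 ≤ ρs i := fun i => (hρs i).1.le
  have h0sq : ∀ l : Fin n, ((0 : Fin n → ℝ)) l ^ 2 < 1 := fun l => by norm_num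
  have hg0 : 0 < gFun n ρs 0 :=
    gFun_pos n ρs 0 hρsnn (fun l => le_refl 0) (fun l => one_pos)
  have hdiff : ∀ i : Fin n, DifferentiableAt ℝ (fun ρ => emF n ρs ρ i) (0 : Fin n → ℝ) :=
    fun i => (contDiffAt_emF n ρs 0 i h0sq hg0).differentiableAt (by simp)
  refine ⟨hdiff, ?_, ?_⟩
  · intro i j
    set a : ℝ := if i = j then 1 else ρs i * ρs j with ha
    have hline : HasDerivAt (fun t : ℝ => t • (Pi.single j 1 : Fin n → ℝ)) (Pi.single j 1) 0 := by
      simpa using (hasDerivAt_id (0 : ℝ)).smul_const (Pi.single j 1 : Fin n → ℝ)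
    have hcomp : HasDerivAt (fun t : ℝ => emF n ρs (t • (Pi.single j 1 : Fin n → ℝ)) i)
        (fderiv ℝ (fun ρ => emF n ρs ρ i) (0 : Fin n → ℝ) (Pi.single j 1)) 0 := by
      have h1 := (hdiff i).hasFDerivAt
      have h0 : (0 : ℝ) • (Pi.single j 1 : Fin n → ℝ) = 0 := zero_smul _ _
      rw [← h0] at h1
      simpa [Function.comp_def, h0] using h1.comp_hasDerivAt 0 hline
    have heq : (fun t : ℝ => emF n ρs (t • (Pi.single j 1 : Fin n → ℝ)) i)
        =ᶠ[nhds (0 : ℝ)] fun t => a * t := by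
      filter_upwards [Ioo_mem_nhds (by norm_num : (-1 : ℝ) < 0) (by norm_num : (0:ℝ) < 1)]
        with t ht
      have ht2 : t ^ 2 < 1 := by obtain ⟨h1, h2⟩ := ht; nlinarith
      have hsingle : t • (Pi.single j 1 : Fin n → ℝ) = Pi.single j t := by
        funext l
        simp [Pi.single_apply, mul_ite]
      rw [hsingle, emF_single n ρs i j t ht2, ha]
      rcases eq_or_ne i j with rfl | hij
      · simp
      · simp [hij]
    have hA : HasDerivAt (fun t : ℝ => a * t) a 0 := by
      simpa using (hasDerivAt_id (0 : ℝ)).const_mul a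
    have hA' : HasDerivAt (fun t : ℝ => a * t)
        (fderiv ℝ (fun ρ => emF n ρs ρ i) (0 : Fin n → ℝ) (Pi.single j 1)) 0 :=
      hcomp.congr_of_eventuallyEq heq.symm
    exact (hA'.unique hA)
  · -- second derivative bound
    set U : Set (Fin n → ℝ) := {ρ | (∀ l, ρ l ^ 2 < 1) ∧ 0 < gFun n ρs ρ} with hU
    have hUopen : IsOpen U := by
      rw [isOpen_iff_mem_nhds]
      intro ρ₀ hρ₀
      have hV : {ρ : Fin n → ℝ | ∀ l, ρ l ^ 2 < 1} ∈ nhds ρ₀ := by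
        have hVopen : IsOpen {ρ : Fin n → ℝ | ∀ l, ρ l ^ 2 < 1} := by
          have : {ρ : Fin n → ℝ | ∀ l, ρ l ^ 2 < 1}
              = ⋂ l, (fun ρ : Fin n → ℝ => ρ l) ⁻¹' {y : ℝ | y ^ 2 < 1} := by
            ext ρ; simp
          rw [this]
          exact isOpen_iInter_of_finite fun l =>
            (isOpen_lt (by continuity) continuous_const).preimage (continuous_apply l)
        exact hVopen.mem_nhds hρ₀.1
      have hgc : ContinuousAt (gFun n ρs) ρ₀ := (contDiffAt_gFun n ρs ρ₀ hρ₀.1).continuousAt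
      have hW : (gFun n ρs) ⁻¹' Set.Ioi 0 ∈ nhds ρ₀ :=
        hgc.preimage_mem_nhds (Ioi_mem_nhds hρ₀.2)
      filter_upwards [hV, hW] with ρ h1 h2
      exact ⟨h1, h2⟩
    set K : Set (Fin n → ℝ) := Set.univ.pi fun _ => Set.Icc (0 : ℝ) (1 / 2) with hK
    have hKcomp : IsCompact K := isCompact_univ_pi fun _ => isCompact_Icc
    have hKU : K ⊆ U := by
      intro ρ hρ
      have hρ' : ∀ l, ρ l ∈ Set.Icc (0 : ℝ) (1 / 2) := fun l => hρ l (Set.mem_univ l)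
      refine ⟨fun l => ?_, gFun_pos n ρs ρ hρsnn (fun l => (hρ' l).1)
        (fun l => lt_of_le_of_lt (hρ' l).2 (by norm_num))⟩
      have := (hρ' l).1; have := (hρ' l).2; nlinarith
    have hCD : ∀ i : Fin n, ContDiffOn ℝ 2 (fun ρ => emF n ρs ρ i) U := fun i ρ hρ =>
      ((contDiffAt_emF n ρs ρ i hρ.1 hρ.2).of_le le_top).contDiffWithinAt
    have hcont : ∀ i : Fin n,
        ContinuousOn (iteratedFDeriv ℝ 2 (fun ρ => emF n ρs ρ i)) U := by
      intro i
      have h1 := (hCD i).continuousOn_iteratedFDerivWithin le_rfl hUopen.uniqueDiffOn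
      exact h1.congr fun ρ hρ => (iteratedFDerivWithin_of_isOpen 2 hUopen hρ).symm
    have hex : ∀ i : Fin n, ∃ C, ∀ ρ ∈ K,
        ‖iteratedFDeriv ℝ 2 (fun ρ' => emF n ρs ρ' i) ρ‖ ≤ C := fun i =>
      hKcomp.exists_bound_of_continuousOn ((hcont i).mono hKU)
    choose B hB using hex
    refine ⟨1 + ∑ i, |B i|, by positivity, ?_⟩
    intro i j k ρ hρ
    have hρK : ρ ∈ K := Set.mem_univ_pi.mpr fun l => hρ l
    have h1 : ‖iteratedFDeriv ℝ 2 (fun ρ' => emF n ρs ρ' i) ρ‖ ≤ B i := hB i ρ hρK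
    have hnormj : ‖(Pi.single j 1 : Fin n → ℝ)‖ = 1 := by rw [Pi.norm_single]; norm_num
    have hnormk : ‖(Pi.single k 1 : Fin n → ℝ)‖ = 1 := by rw [Pi.norm_single]; norm_num
    have h2 := (iteratedFDeriv ℝ 2 (fun ρ' => emF n ρs ρ' i) ρ).le_opNorm
      ![Pi.single j 1, Pi.single k 1]
    rw [Fin.prod_univ_two] at h2
    simp only [Matrix.cons_val_zero, Matrix.cons_val_one, Matrix.head_cons,
      hnormj, hnormk, mul_one] at h2
    rw [Real.norm_eq_abs] at h2
    have h3 : B i ≤ ∑ i', |B i'| := by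
      calc B i ≤ |B i| := le_abs_self _
        _ ≤ ∑ i', |B i'| := Finset.single_le_sum (f := fun i' => |B i'|)
          (fun i' _ => abs_nonneg _) (Finset.mem_univ i)
    linarith
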